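/- For the Smale majorant function f(t) = t/(1 − γt) − 2t on [0, 1/γ) with γ > 0, f satisfies f(0)=0, f'(0)=−1, f' is strictly increasing and convex, ν = (1 − √2/2)/γ, ρ = (5 − √17)/(4γ), and the zeros of f in [0,1/γ) are exactly 0 and 1/(2γ), with f(t) < 0 for t ∈ (0, 1/(2γ)). -/

import Mathlib

set_option maxHeartbeats 2000000

theorem stmt17 (γ : ℝ) (hγ : 0 < γ)
    (f f' : ℝ → ℝ)
    (hf : f = fun t => t / (1 - γ * t) - 2 * t)
    (hf' : f' = fun t => 1 / (1 - γ * t) ^ 2 - 2)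
    (ν ρ : ℝ) (hν : ν = sSup {t ∈ Set.Ico 0 (1 / γ) | f' t < 0})
    (hρ : ρ = sSup {δ : ℝ | δ ∈ Set.Ioo 0 ν ∧ ∀ t ∈ Set.Ioo 0 δ, (f t / f' t - t) / t < 1}) :
    f 0 = 0 ∧ f' 0 = -1 ∧
      StrictMonoOn f' (Set.Ico 0 (1 / γ)) ∧
      ConvexOn ℝ (Set.Ico 0 (1 / γ)) f' ∧
      ν = (1 - Real.sqrt 2 / 2) / γ ∧
      ρ = (5 - Real.sqrt 17) / (4 * γ) ∧
      (∀ t ∈ Set.Ico 0 (1 / γ), (f t = 0 ↔ t = 0 ∨ t = 1 / (2 * γ))) ∧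
      ∀ t ∈ Set.Ioo 0 (1 / (2 * γ)), f t < 0 := by
  have hq2 : Real.sqrt 2 ^ 2 = 2 := Real.sq_sqrt (by norm_num)
  have hqpos : 0 < Real.sqrt 2 := Real.sqrt_pos.2 (by norm_num)
  have hq_lt : Real.sqrt 2 < 3/2 := by nlinarith
  have hq_gt : 1 < Real.sqrt 2 := by nlinarith
  have hs2 : Real.sqrt 17 ^ 2 = 17 := Real.sq_sqrt (by norm_num)
  have hspos : 0 < Real.sqrt 17 := Real.sqrt_pos.2 (by norm_num)
  have hs_lt : Real.sqrt 17 < 5 := by nlinarith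
  have hs_gt : 4 < Real.sqrt 17 := by nlinarith
  set q := Real.sqrt 2 with hqdef
  set s := Real.sqrt 17 with hsdef
  set ν₀ : ℝ := (1 - q / 2) / γ with hν₀def
  set ρ₀ : ℝ := (5 - s) / (4 * γ) with hρ₀def
  have hν₀pos : 0 < ν₀ := div_pos (by nlinarith) hγ
  have hν₀lt : ν₀ < 1 / γ := by
    rw [div_lt_div_iff₀ hγ hγ]; nlinarith
  have hρ₀pos : 0 < ρ₀ := div_pos (by nlinarith) (by linarith)
  have hρ₀lt : ρ₀ < ν₀ := by
    rw [hρ₀def, hν₀def, div_lt_div_iff₀ (by linarith) hγ]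
    nlinarith [sq_nonneg (s - 2*q - 1)]
  -- characterization of f' < 0
  have hf'neg : ∀ t : ℝ, 0 ≤ t → t < ν₀ → f' t < 0 := by
    intro t ht htn
    have hu : γ * t < 1 - q/2 := by
      rw [hν₀def, lt_div_iff₀ hγ] at htn; nlinarith
    have hA : 0 < 1 - γ * t := by nlinarith [mul_nonneg hγ.le ht]
    have hA2 : (1:ℝ)/2 < (1 - γ*t)^2 := by nlinarith [mul_nonneg hγ.le ht]
    rw [hf']; simp only
    rw [sub_neg, div_lt_iff₀ (by positivity)]
    nlinarith
  -- trivial parts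
  have part1 : f 0 = 0 := by rw [hf]; norm_num
  have part2 : f' 0 = -1 := by rw [hf']; norm_num
  have part3 : StrictMonoOn f' (Set.Ico 0 (1 / γ)) := by
    intro a ha b hb hab
    obtain ⟨ha0, ha1⟩ := ha
    obtain ⟨hb0, hb1⟩ := hb
    have hB : 0 < 1 - γ * b := by
      rw [lt_div_iff₀ hγ] at hb1; nlinarith
    have hAB : 1 - γ * b < 1 - γ * a := by nlinarith
    rw [hf']; simp only
    have h1 : (1 - γ*b)^2 < (1 - γ*a)^2 := by nlinarith
    have := div_lt_div_of_pos_left (show (0:ℝ) < 1 by norm_num) (show (0:ℝ) < (1 - γ*b)^2 by positivity) h1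
    linarith
  have part4 : ConvexOn ℝ (Set.Ico 0 (1 / γ)) f' := by
    have hg : ConvexOn ℝ (Set.Ioi (0:ℝ)) fun x : ℝ => x ^ (-2:ℤ) := convexOn_zpow (-2)
    constructor
    · exact convex_Ico 0 (1/γ)
    · intro x hx y hy a b ha hb hab
      have hA : 0 < 1 - γ * x := by
        obtain ⟨_, h2⟩ := hx; rw [lt_div_iff₀ hγ] at h2; nlinarith
      have hB : 0 < 1 - γ * y := by
        obtain ⟨_, h2⟩ := hy; rw [lt_div_iff₀ hγ] at h2; nlinarith
      have key := hg.2 (Set.mem_Ioi.2 hA) (Set.mem_Ioi.2 hB) ha hb hab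
      simp only [smul_eq_mul] at key ⊢
      have heq : a * (1 - γ * x) + b * (1 - γ * y) = 1 - γ * (a * x + b * y) := by
        linear_combination hab
      rw [heq] at key
      have hz0 : 0 < a * (1 - γ * x) + b * (1 - γ * y) := by
        rcases eq_or_lt_of_le ha with h0 | h0
        · have hb1 : b = 1 := by linarith [hab, h0]
          rw [← h0, hb1]; ring_nf; nlinarith
        · nlinarith [mul_pos h0 hA, mul_nonneg hb hB.le]
      have hz : 0 < 1 - γ * (a * x + b * y) := heq ▸ hz0
      have e1 : (1 - γ * (a*x+b*y)) ^ (-2 : ℤ) = 1 / (1 - γ * (a*x+b*y))^2 := by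
        rw [zpow_neg, zpow_two]; rw [one_div]; ring_nf
      have e2 : (1 - γ * x) ^ (-2 : ℤ) = 1 / (1 - γ * x)^2 := by
        rw [zpow_neg, zpow_two]; rw [one_div]; ring_nf
      have e3 : (1 - γ * y) ^ (-2 : ℤ) = 1 / (1 - γ * y)^2 := by
        rw [zpow_neg, zpow_two]; rw [one_div]; ring_nf
      rw [e1, e2, e3] at key
      rw [hf']; simp only
      nlinarith [key]
  -- ν
  have hsetν : {t ∈ Set.Ico 0 (1 / γ) | f' t < 0} = Set.Ico 0 ν₀ := by
    ext t
    simp only [Set.mem_setOf_eq, Set.mem_Ico]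
    constructor
    · rintro ⟨⟨ht0, ht1⟩, htf⟩
      refine ⟨ht0, ?_⟩
      by_contra hcon
      push_neg at hcon
      -- t ≥ ν₀ means γ t ≥ 1 - q/2, so (1-γt)^2 ≥ 1/2, so f' t ≥ 0
      have hu : 1 - q/2 ≤ γ * t := by
        rw [hν₀def, div_le_iff₀ hγ] at hcon; nlinarith
      have hA : 0 < 1 - γ * t := by rw [lt_div_iff₀ hγ] at ht1; nlinarith
      have hA2 : (1 - γ*t)^2 ≤ 1/2 := by nlinarith
      rw [hf'] at htf; simp only at htf
      rw [sub_neg, div_lt_iff₀ (by positivity)] at htf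
      nlinarith
    · rintro ⟨ht0, ht1⟩
      exact ⟨⟨ht0, lt_trans ht1 hν₀lt⟩, hf'neg t ht0 ht1⟩
  have part5 : ν = ν₀ := by
    rw [hν, hsetν, csSup_Ico hν₀pos]
  -- key iff for ρ condition
  have key : ∀ t : ℝ, 0 < t → t < ν₀ →
      ((f t / f' t - t) / t < 1 ↔ 0 < 1 - 5*(γ*t) + 2*(γ*t)^2) := by
    intro t ht htn
    have hu : γ * t < 1 - q/2 := by
      rw [hν₀def, lt_div_iff₀ hγ] at htn; nlinarith
    have hA : 0 < 1 - γ * t := by nlinarith [mul_pos hγ ht]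
    have hf't : f' t < 0 := hf'neg t ht.le htn
    rw [div_lt_one ht, sub_lt_iff_lt_add, div_lt_iff_of_neg hf't, hf, hf']
    simp only
    have heq : t / (1 - γ*t) - 2*t - (t + t) * (1/(1 - γ*t)^2 - 2) =
        t * (1 - 5*(γ*t) + 2*(γ*t)^2) / (1 - γ*t)^2 := by
      rw [eq_div_iff (pow_ne_zero 2 hA.ne')]
      have e1 : t / (1 - γ*t) * (1 - γ*t) = t := div_mul_cancel₀ _ hA.ne'
      have e2 : 1 / (1 - γ*t)^2 * (1 - γ*t)^2 = 1 := one_div_mul_cancel (pow_ne_zero 2 hA.ne')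
      linear_combination (1 - γ*t) * e1 - (t+t) * e2
    rw [← sub_pos, heq, div_pos_iff]
    constructor
    · rintro (⟨h1, _⟩ | ⟨_, h2⟩)
      · nlinarith
      · nlinarith [sq_nonneg (1 - γ*t)]
    · intro h
      exact Or.inl ⟨by nlinarith, by positivity⟩
  have hsetρ : {δ : ℝ | δ ∈ Set.Ioo 0 ν ∧ ∀ t ∈ Set.Ioo 0 δ, (f t / f' t - t) / t < 1}
      = Set.Ioc 0 ρ₀ := by
    rw [part5]
    ext δ
    simp only [Set.mem_setOf_eq, Set.mem_Ioo, Set.mem_Ioc]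
    constructor
    · rintro ⟨⟨hδ0, hδν⟩, hall⟩
      refine ⟨hδ0, ?_⟩
      by_contra hcon
      push_neg at hcon
      set t := (ρ₀ + δ) / 2 with htdef
      have ht1 : ρ₀ < t := by rw [htdef]; linarith
      have ht2 : t < δ := by rw [htdef]; linarith
      have ht0 : 0 < t := lt_trans hρ₀pos ht1
      have htn : t < ν₀ := lt_trans ht2 hδν
      have hcond := hall t ⟨ht0, ht2⟩
      rw [key t ht0 htn] at hcond
      -- γ t > (5-s)/4, and γ t < 1 - q/2 < (5+s)/4, so 1 - 5u + 2u² < 0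
      have hu1 : (5 - s)/4 < γ * t := by
        rw [hρ₀def, div_lt_iff₀ (show (0:ℝ) < 4*γ by positivity)] at ht1
        rw [div_lt_iff₀ (show (0:ℝ) < 4 by norm_num)]
        nlinarith [ht1]
      have hu2 : γ * t < (5 + s)/4 := by
        have : γ * t < 1 - q/2 := by rw [hν₀def, lt_div_iff₀ hγ] at htn; nlinarith
        nlinarith
      nlinarith [mul_pos (sub_pos.2 hu1) (sub_pos.2 hu2)]
    · rintro ⟨hδ0, hδρ⟩
      refine ⟨⟨hδ0, lt_of_le_of_lt hδρ hρ₀lt⟩, ?_⟩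
      intro t ⟨ht0, htδ⟩
      have htρ : t < ρ₀ := lt_of_lt_of_le htδ hδρ
      have htn : t < ν₀ := lt_trans htρ hρ₀lt
      rw [key t ht0 htn]
      have hu1 : γ * t < (5 - s)/4 := by
        rw [hρ₀def] at htρ
        rw [lt_div_iff₀ (by norm_num : (0:ℝ) < 4)]
        rw [lt_div_iff₀ (by linarith : (0:ℝ) < 4 * γ)] at htρ
        nlinarith
      have hu0 : 0 < γ * t := mul_pos hγ ht0
      nlinarith [mul_pos (sub_pos.2 hu1) hu0]
  have part6 : ρ = ρ₀ := by
    rw [hρ, hsetρ, csSup_Ioc hρ₀pos]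
  -- zeros
  have part7 : ∀ t ∈ Set.Ico 0 (1 / γ), (f t = 0 ↔ t = 0 ∨ t = 1 / (2 * γ)) := by
    rintro t ⟨ht0, ht1⟩
    have hA : 0 < 1 - γ * t := by rw [lt_div_iff₀ hγ] at ht1; nlinarith
    rw [hf]; simp only
    constructor
    · intro h
      have h2 : t * (2 * γ * t - 1) = 0 := by
        have := sub_eq_zero.1 h
        rw [div_eq_iff hA.ne'] at this
        linear_combination this
      rcases mul_eq_zero.1 h2 with h3 | h3
      · exact Or.inl h3
      · right
        field_simp
        linarith
    · rintro (h | h)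
      · rw [h]; norm_num
      · rw [h]
        have h1 : 1 - γ * (1 / (2 * γ)) = 1/2 := by field_simp; ring
        rw [h1]
        field_simp
        ring
  have part8 : ∀ t ∈ Set.Ioo 0 (1 / (2 * γ)), f t < 0 := by
    rintro t ⟨ht0, ht1⟩
    have hu : 2 * (γ * t) < 1 := by
      rw [lt_div_iff₀ (by linarith : (0:ℝ) < 2 * γ)] at ht1; nlinarith
    have hA : 0 < 1 - γ * t := by nlinarith
    rw [hf]; simp only
    rw [sub_neg, div_lt_iff₀ hA]
    nlinarith
  exact ⟨part1, part2, part3, part4, part5, part6, part7, part8⟩
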